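/- Let g₂, g₃, c₀ ∈ ℝ, let n ≥ 3 be a natural number, set C := −n(n+1)·X + c₀, and let A = Σ_{i=0}^{n} a_i X^i ∈ ℝ[X] be monic of degree n (a_n = 1) satisfying the even-case Lamé symmetry identity (4X³ − g₂X − g₃)·A''' + (18X² − (3/2)g₂)·A'' + 4(3X + C)·A' + 2A·C' = 0 in ℝ[X]. Then the coefficients of A are given by: a_{n−1} = c₀/(2n−1), a_{n−2} = (8c₀² − n·g₂·(2n−1)²)·(n−1) / (8(2n−3)(2n−1)²), and for every i with 0 ≤ i ≤ n−3, a_i = ((2i²+10i+12)·a_{i+3}·g₃ + (2i²+7i+6)·a_{i+2}·g₂ − 8c₀·a_{i+1})·(i+1) / (4(i+n+1)(2i+1)(i−n)), where a_{n+1} and a_{n+2} are interpreted as 0 when they occur. -/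
import Mathlib


open Polynomial


lemma key_coeff (g₂ g₃ c₀ : ℝ) (n : ℕ)
    (A : Polynomial ℝ)
    (h : (4 * X ^ 3 - Polynomial.C g₂ * X - Polynomial.C g₃)
          * derivative (derivative (derivative A))
        + (18 * X ^ 2 - Polynomial.C (3 / 2 * g₂)) * derivative (derivative A)
        + 4 * (3 * X + (Polynomial.C (-((n : ℝ) * (n + 1))) * X + Polynomial.C c₀))
            * derivative A
        + 2 * A * derivative (Polynomial.C (-((n : ℝ) * (n + 1))) * X + Polynomial.C c₀)
        = 0) (k : ℕ) :
    2*(2*(k:ℝ)+1)*((k:ℝ)-n)*((k:ℝ)+n+1) * A.coeff k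
      + 4*c₀*((k:ℝ)+1) * A.coeff (k+1)
      - g₂/2*((k:ℝ)+1)*((k:ℝ)+2)*(2*(k:ℝ)+3) * A.coeff (k+2)
      - g₃*((k:ℝ)+1)*((k:ℝ)+2)*((k:ℝ)+3) * A.coeff (k+3) = 0 := by
  have hd : derivative (Polynomial.C (-((n:ℝ)*(n+1))) * X + Polynomial.C c₀)
      = Polynomial.C (-((n:ℝ)*(n+1))) := by simp
  rw [hd] at h
  have h2 : (4:Polynomial ℝ) * (derivative (derivative (derivative A)) * X^3)
      + Polynomial.C (-g₂) * (derivative (derivative (derivative A)) * X^1)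
      + Polynomial.C (-g₃) * derivative (derivative (derivative A))
      + (18:Polynomial ℝ) * (derivative (derivative A) * X^2)
      + Polynomial.C (-(3/2*g₂)) * derivative (derivative A)
      + (12:Polynomial ℝ) * (derivative A * X^1)
      + (4:Polynomial ℝ) * Polynomial.C (-((n:ℝ)*(n+1))) * (derivative A * X^1)
      + (4:Polynomial ℝ) * Polynomial.C c₀ * derivative A
      + (2:Polynomial ℝ) * Polynomial.C (-((n:ℝ)*(n+1))) * A = 0 := by
    rw [← h]; simp only [map_neg]; ring
  have h3 := congrArg (fun p => p.coeff k) h2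
  simp only [coeff_add, coeff_ofNat_mul, coeff_C_mul, coeff_mul_X_pow',
    coeff_zero, coeff_derivative, mul_assoc] at h3
  match k with
  | 0 => norm_num at h3 ⊢; linear_combination h3
  | 1 => norm_num at h3 ⊢; linear_combination h3
  | 2 => norm_num at h3 ⊢; linear_combination h3
  | (m+3) => norm_num at h3 ⊢; push_cast at h3 ⊢; linear_combination h3

/-- In the even Lamé case with `C = −n(n+1)X + c₀` and `A` monic of degree `n ≥ 3`
satisfying the symmetry identity, the coefficients of `A` are determined recursively:
`a_{n−1} = c₀/(2n−1)`, `a_{n−2} = (8c₀² − n·g₂·(2n−1)²)(n−1)/(8(2n−3)(2n−1)²)`, and for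
`0 ≤ i ≤ n−3`,
`a_i = ((2i²+10i+12)a_{i+3}g₃ + (2i²+7i+6)a_{i+2}g₂ − 8c₀a_{i+1})(i+1)/(4(i+n+1)(2i+1)(i−n))`.
(Coefficients above degree `n` vanish, so `a_{n+1} = a_{n+2} = 0` automatically.) -/
theorem even_lame_coefficients
    (g₂ g₃ c₀ : ℝ) (n : ℕ) (hn : 3 ≤ n)
    (A : Polynomial ℝ) (hA : A.Monic) (hdeg : A.natDegree = n)
    (h : (4 * X ^ 3 - Polynomial.C g₂ * X - Polynomial.C g₃)
          * derivative (derivative (derivative A))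
        + (18 * X ^ 2 - Polynomial.C (3 / 2 * g₂)) * derivative (derivative A)
        + 4 * (3 * X + (Polynomial.C (-((n : ℝ) * (n + 1))) * X + Polynomial.C c₀))
            * derivative A
        + 2 * A * derivative (Polynomial.C (-((n : ℝ) * (n + 1))) * X + Polynomial.C c₀)
        = 0) :
    A.coeff (n - 1) = c₀ / (2 * (n : ℝ) - 1) ∧
    A.coeff (n - 2) = (8 * c₀ ^ 2 - (n : ℝ) * g₂ * (2 * (n : ℝ) - 1) ^ 2) * ((n : ℝ) - 1)
        / (8 * (2 * (n : ℝ) - 3) * (2 * (n : ℝ) - 1) ^ 2) ∧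
    ∀ i : ℕ, i ≤ n - 3 →
      A.coeff i = ((2 * (i : ℝ) ^ 2 + 10 * (i : ℝ) + 12) * A.coeff (i + 3) * g₃
            + (2 * (i : ℝ) ^ 2 + 7 * (i : ℝ) + 6) * A.coeff (i + 2) * g₂
            - 8 * c₀ * A.coeff (i + 1)) * ((i : ℝ) + 1)
          / (4 * ((i : ℝ) + (n : ℝ) + 1) * (2 * (i : ℝ) + 1) * ((i : ℝ) - (n : ℝ))) := by
  have key := key_coeff g₂ g₃ c₀ n A h
  obtain ⟨m, rfl⟩ : ∃ m, n = m + 3 := ⟨n - 3, by omega⟩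
  have an : A.coeff (m + 3) = 1 := by
    have := hA.coeff_natDegree; rwa [hdeg] at this
  have an1 : A.coeff (m + 4) = 0 :=
    coeff_eq_zero_of_natDegree_lt (by omega)
  have an2 : A.coeff (m + 5) = 0 :=
    coeff_eq_zero_of_natDegree_lt (by omega)
  have hm0 : ((m:ℝ) + 3) ≠ 0 := by positivity
  have hm1 : 2 * ((m:ℝ) + 3) - 1 ≠ 0 := by
    have := Nat.cast_nonneg (α := ℝ) m; intro hc; linarith
  have hm3 : 2 * ((m:ℝ) + 3) - 3 ≠ 0 := by
    have := Nat.cast_nonneg (α := ℝ) m; intro hc; linarith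
  have h1 : A.coeff (m + 3 - 1) = c₀ / (2 * ((m + 3 : ℕ) : ℝ) - 1) := by
    have k1 := key (m + 2)
    rw [show m + 2 + 1 = m + 3 from rfl, show m + 2 + 2 = m + 4 from rfl,
      show m + 2 + 3 = m + 5 from rfl, an, an1, an2] at k1
    show A.coeff (m + 2) = _
    push_cast at k1 ⊢
    rw [eq_div_iff hm1]
    apply mul_left_cancel₀ (show (-4 * ((m:ℝ) + 3)) ≠ 0 by positivity)
    linear_combination k1
  refine ⟨h1, ?_, ?_⟩
  · have k2 := key (m + 1)
    rw [show m + 1 + 1 = m + 2 from rfl, show m + 1 + 2 = m + 3 from rfl,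
      show m + 1 + 3 = m + 4 from rfl, an, an1] at k2
    have h1' : A.coeff (m + 2) = c₀ / (2 * ((m:ℝ) + 3) - 1) := by
      have := h1; push_cast at this; exact this
    rw [h1'] at k2
    show A.coeff (m + 1) = _
    push_cast at k2 ⊢
    field_simp at k2
    rw [eq_div_iff (by
      apply mul_ne_zero (mul_ne_zero _ _) (pow_ne_zero 2 hm1)
      · norm_num
      · exact hm3)]
    linear_combination -k2
  · intro i hi
    have ki := key i
    have hin : (i:ℝ) < (m:ℝ) + 3 := by
      have : (i:ℝ) ≤ (m:ℝ) := by exact_mod_cast (by omega : i ≤ m)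
      linarith
    have d1 : (i:ℝ) + ((m:ℝ) + 3) + 1 ≠ 0 := by positivity
    have d2 : 2 * (i:ℝ) + 1 ≠ 0 := by positivity
    have d3 : (i:ℝ) - ((m:ℝ) + 3) ≠ 0 := by intro hc; linarith
    push_cast at ki ⊢
    rw [eq_div_iff (by
      apply mul_ne_zero (mul_ne_zero (mul_ne_zero _ d1) d2) d3
      norm_num)]
    linear_combination 2 * ki
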